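/- arXiv:1809.10978 — 3 statements merged into one kernel-verified Lean document; each statement's English description precedes it below -/
import Mathlib

section
/- Let g ≥ 1 and let b₁ ≤ … ≤ b_g be nonnegative real numbers satisfying ∑_{i=1}^{g} (b_g − b_i) ≤ 4. Then the minimum of Q(x) = 2∑_{i=1}^g x_i² + ∑_{i=1}^g b_i x_i over the standard simplex {x ∈ ℝ^g : x_i ≥ 0, ∑ x_i = 1} equals (1/(8g))·(4 + ∑_{i=1}^g b_i)² − (1/8)·∑_{i=1}^g b_i². -/
open Finset

/-- If `b₁ ≤ … ≤ b_g ≥ 0` with `∑ (b_g − b_i) ≤ 4`, the minimum of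
`Q(x) = 2∑ x_i² + ∑ b_i x_i` over the standard simplex equals
`(1/(8g))(4 + ∑ b_i)² − (1/8)∑ b_i²`. -/
theorem stmt3 (g : ℕ) (hg : 0 < g) (b : Fin g → ℝ)
    (hmono : Monotone b) (hnonneg : ∀ i, 0 ≤ b i)
    (hsum : ∑ i, (b ⟨g - 1, by omega⟩ - b i) ≤ 4) :
    IsLeast
      {y : ℝ | ∃ x : Fin g → ℝ, (∀ i, 0 ≤ x i) ∧ (∑ i, x i = 1) ∧
        y = 2 * ∑ i, x i ^ 2 + ∑ i, b i * x i}
      ((1 / (8 * (g : ℝ))) * (4 + ∑ i, b i) ^ 2 - (1 / 8) * ∑ i, b i ^ 2) := by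
  have hg' : (g : ℝ) ≠ 0 := Nat.cast_ne_zero.mpr hg.ne'
  have hgpos : (0:ℝ) < g := Nat.cast_pos.mpr hg
  set S : ℝ := ∑ i, b i with hS
  set T : ℝ := ∑ i, b i ^ 2 with hT
  set L : ℝ := (4 + S) / g with hLdef
  have hL : (g : ℝ) * L = 4 + S := by rw [hLdef]; field_simp
  set xs : Fin g → ℝ := fun i => (L - b i) / 4 with hxsdef
  -- sum of xs is 1
  have hxs_sum : ∑ i, xs i = 1 := by
    have : ∑ i, xs i = ((g : ℝ) * L - S) / 4 := by
      simp only [hxsdef]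
      rw [← Finset.sum_div, Finset.sum_sub_distrib, Finset.sum_const, Finset.card_univ,
        Fintype.card_fin, nsmul_eq_mul, hS]
    rw [this, hL]; ring
  -- sum of xs squared
  have hxs_sq : ∑ i, xs i ^ 2 = ((g : ℝ) * L ^ 2 - 2 * L * S + T) / 16 := by
    have h1 : ∀ i ∈ Finset.univ, xs i ^ 2 = L ^ 2 / 16 - (L / 8) * b i + b i ^ 2 / 16 :=
      fun i _ => by simp only [hxsdef]; ring
    rw [Finset.sum_congr rfl h1]
    simp [Finset.sum_add_distrib, Finset.sum_sub_distrib, ← Finset.mul_sum,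
      ← Finset.sum_div, Finset.sum_const, Finset.card_univ, hS, hT]
    ring
  -- the key identity
  have key : ∀ x : Fin g → ℝ, (∑ i, x i = 1) →
      2 * ∑ i, x i ^ 2 + ∑ i, b i * x i =
        ((1 / (8 * (g : ℝ))) * (4 + S) ^ 2 - (1 / 8) * T) + 2 * ∑ i, (x i - xs i) ^ 2 := by
    intro x hx1
    have h1 : ∀ i ∈ Finset.univ, (x i - xs i) ^ 2 =
        x i ^ 2 - ((L / 2) * x i - (1/2) * (b i * x i)) + xs i ^ 2 := by
      intro i _; simp only [hxsdef]; ring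
    rw [Finset.sum_congr rfl h1]
    rw [Finset.sum_add_distrib, Finset.sum_sub_distrib, Finset.sum_sub_distrib,
      ← Finset.mul_sum, ← Finset.mul_sum, hx1, hxs_sq]
    have h2 : (1 / (8 * (g : ℝ))) * (4 + S) ^ 2 = ((g:ℝ) * L) * L / 8 := by
      rw [hL]; field_simp [hLdef]; linear_combination (-(4 + S)) * hL
    rw [h2]
    have h3 : ((g:ℝ) * L) * L = (4 + S) * L := by rw [hL]
    rw [h3]
    have h4 : (g : ℝ) * L ^ 2 = (4 + S) * L := by rw [← hL]; ring
    rw [h4]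
    ring
  constructor
  · -- membership: xs is feasible and attains the value
    have hbound : ∀ i, b i ≤ L := by
      intro i
      have hlast : b i ≤ b ⟨g - 1, by omega⟩ := hmono (by
        show i.val ≤ g - 1
        omega)
      have hsum' : (g : ℝ) * b ⟨g - 1, by omega⟩ - S ≤ 4 := by
        have : ∑ i, (b ⟨g - 1, by omega⟩ - b i) =
            (g : ℝ) * b ⟨g - 1, by omega⟩ - S := by
          simp [Finset.sum_sub_distrib, Finset.sum_const, Finset.card_univ, hS]
        linarith [hsum, this.symm.le, this.le]
      have : b ⟨g - 1, by omega⟩ ≤ L := by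
        rw [hLdef, le_div_iff₀ hgpos]; linarith
      linarith
    refine ⟨xs, ?_, hxs_sum, ?_⟩
    · intro i
      have := hbound i
      simp only [hxsdef]
      linarith
    · rw [key xs hxs_sum]
      simp
  · -- lower bound
    rintro y ⟨x, hx0, hx1, rfl⟩
    rw [key x hx1]
    have : (0:ℝ) ≤ ∑ i, (x i - xs i) ^ 2 :=
      Finset.sum_nonneg fun i _ => sq_nonneg _
    linarith
end

section
/- The minimum of 2(m₁² + m₂² + m₃²) + m₃ over all (m₁, m₂, m₃) with m₁ + m₂ + m₃ = 1 and m₁ ≥ m₂ ≥ m₃ ≥ 0 equals 11/12. -/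
/-- The minimum of `2(m₁²+m₂²+m₃²)+m₃` over the ordered 3-simplex is `11/12`. -/
theorem stmt6 :
    IsLeast
      {y : ℝ | ∃ m₁ m₂ m₃ : ℝ, m₁ + m₂ + m₃ = 1 ∧ m₂ ≤ m₁ ∧ m₃ ≤ m₂ ∧ 0 ≤ m₃ ∧
        y = 2 * (m₁ ^ 2 + m₂ ^ 2 + m₃ ^ 2) + m₃}
      (11 / 12) := by
  constructor
  · exact ⟨5/12, 5/12, 1/6, by norm_num, le_refl _, by norm_num, by norm_num, by norm_num⟩
  · rintro y ⟨m₁, m₂, m₃, hsum, _, _, _, rfl⟩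
    nlinarith [sq_nonneg (m₁ - m₂), sq_nonneg (m₃ - 1/6)]
end

section
/- The minimum of 2(m₁² + m₂² + m₃² + m₄²) + m₄ over all (m₁, m₂, m₃, m₄) with m₁ + m₂ + m₃ + m₄ = 1 and m₁ ≥ m₂ ≥ m₃ ≥ m₄ ≥ 0 equals 21/32. -/
/-- The minimum of `2(m₁²+m₂²+m₃²+m₄²)+m₄` over the ordered 4-simplex is `21/32`. -/
theorem stmt7 :
    IsLeast
      {y : ℝ | ∃ m₁ m₂ m₃ m₄ : ℝ, m₁ + m₂ + m₃ + m₄ = 1 ∧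
        m₂ ≤ m₁ ∧ m₃ ≤ m₂ ∧ m₄ ≤ m₃ ∧ 0 ≤ m₄ ∧
        y = 2 * (m₁ ^ 2 + m₂ ^ 2 + m₃ ^ 2 + m₄ ^ 2) + m₄}
      (21 / 32) := by
  constructor
  · exact ⟨5/16, 5/16, 5/16, 1/16, by norm_num, by norm_num, by norm_num, by norm_num,
      by norm_num, by norm_num⟩
  · rintro y ⟨m₁, m₂, m₃, m₄, hsum, _, _, _, _, rfl⟩
    nlinarith [sq_nonneg (m₁ - m₂), sq_nonneg (m₂ - m₃), sq_nonneg (m₁ - m₃),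
      sq_nonneg (m₄ - 1/16), sq_nonneg (m₁ + m₂ + m₃ - 15/16)]
end
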